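/- Let G be a finite simple graph with exactly 7 edges, exactly 12 vertices of odd degree, and no isolated vertices. Then either G consists of exactly one connected component isomorphic to the path P_3 and exactly five components isomorphic to the path P_2, or G consists of exactly one connected component isomorphic to the star K_{1,3} and exactly four components isomorphic to the path P_2. -/

import Mathlib

open SimpleGraph Finset

variable {W : Type}

lemma walk_end_mem {G : SimpleGraph W} {S : Set W}
    (hclosed : ∀ x ∈ S, ∀ y, G.Adj x y → y ∈ S) :
    ∀ {a b : W}, a ∈ S → G.Walk a b → b ∈ S := by
  intro a b ha p
  induction p with
  | nil => exact ha
  | cons h _ ih => exact ih (hclosed _ ha _ h)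

lemma supp_eq_of_closed {G : SimpleGraph W} {v : W} {S : Set W} (hv : v ∈ S)
    (hclosed : ∀ x ∈ S, ∀ y, G.Adj x y → y ∈ S)
    (hconn : ∀ x ∈ S, G.Reachable v x) :
    (G.connectedComponentMk v).supp = S := by
  ext u
  simp only [ConnectedComponent.mem_supp_iff, ConnectedComponent.eq]
  exact ⟨fun h => walk_end_mem hclosed hv h.symm.some, fun h => (hconn u h).symm⟩

lemma unique_nbr {G : SimpleGraph W} [Fintype W] [DecidableRel G.Adj] {v : W}
    (h : G.degree v = 1) {x y : W} (hx : G.Adj v x) (hy : G.Adj v y) : x = y := by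
  classical
  obtain ⟨a, ha⟩ := Finset.card_eq_one.mp ((G.card_neighborFinset_eq_degree v).trans h)
  have hx' : x ∈ G.neighborFinset v := (G.mem_neighborFinset v x).mpr hx
  have hy' : y ∈ G.neighborFinset v := (G.mem_neighborFinset v y).mpr hy
  rw [ha, Finset.mem_singleton] at hx' hy'
  rw [hx', hy']

lemma supp_pair [Fintype W] {G : SimpleGraph W} [DecidableRel G.Adj] {x y : W}
    (hadj : G.Adj x y) (hdx : G.degree x = 1) (hdy : G.degree y = 1) :
    (G.connectedComponentMk x).supp = {x, y} := by
  apply supp_eq_of_closed (by simp)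
  · rintro a (rfl | rfl) b hab
    · right; exact unique_nbr hdx hab hadj
    · left; exact unique_nbr hdy hab hadj.symm
  · rintro a (rfl | rfl)
    · exact Reachable.refl _
    · exact hadj.reachable

lemma other_comp [Fintype W] {G : SimpleGraph W} [DecidableRel G.Adj] {w : W}
    (hdeg1 : ∀ v, v ≠ w → G.degree v = 1) (c : G.ConnectedComponent)
    (hc : c ≠ G.connectedComponentMk w) :
    ∃ v u : W, v ≠ u ∧ G.Adj v u ∧ v ≠ w ∧ u ≠ w ∧
      c = G.connectedComponentMk v ∧ c.supp = {v, u} := by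
  obtain ⟨v, hv⟩ := c.exists_rep
  have hvw : v ≠ w := by rintro rfl; exact hc hv.symm
  have hdv : G.degree v = 1 := hdeg1 v hvw
  obtain ⟨u, hu⟩ := (G.degree_pos_iff_exists_adj v).mp (by omega)
  have huw : u ≠ w := by
    rintro rfl
    exact hc (hv.symm.trans (ConnectedComponent.eq.mpr hu.reachable))
  exact ⟨v, u, hu.ne, hu, hvw, huw, hv.symm,
    hv ▸ supp_pair hu hdv (hdeg1 u huw)⟩

lemma count_others [Fintype W] [DecidableEq W] {G : SimpleGraph W} [DecidableRel G.Adj] {w : W}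
    (hdeg1 : ∀ v, v ≠ w → G.degree v = 1)
    (hedge : G.edgeFinset.card = 7) :
    {c : G.ConnectedComponent | c ≠ G.connectedComponentMk w}.ncard = 7 - G.degree w := by
  classical
  set D : Set (Sym2 W) := G.edgeSet \ G.incidenceSet w with hD
  set f : Sym2 W → G.ConnectedComponent := fun e => G.connectedComponentMk (Quot.out e).1
    with hf
  have hmem : ∀ e ∈ D, ∃ x y : W, e = s(x, y) ∧ G.Adj x y ∧ x ≠ w ∧ y ≠ w ∧
      f e = G.connectedComponentMk x ∧ (G.connectedComponentMk x).supp = {x, y} := by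
    rintro e ⟨he, hni⟩
    induction e with
    | _ x y =>
      have hadj : G.Adj x y := (G.mem_edgeSet).mp he
      have hxw : x ≠ w := by rintro rfl; exact hni ⟨he, by simp⟩
      have hyw : y ≠ w := by rintro rfl; exact hni ⟨he, by simp⟩
      have hout : (Quot.out s(x, y)).1 ∈ s(x, y) := Sym2.out_fst_mem _
      have hfx : f s(x, y) = G.connectedComponentMk x := by
        show G.connectedComponentMk (Quot.out s(x, y)).1 = G.connectedComponentMk x
        rcases Sym2.mem_iff.mp hout with h | h
        · rw [h]
        · rw [h]; exact ConnectedComponent.eq.mpr hadj.symm.reachable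
      exact ⟨x, y, rfl, hadj, hxw, hyw, hfx,
        supp_pair hadj (hdeg1 x hxw) (hdeg1 y hyw)⟩
  have himg : f '' D = {c : G.ConnectedComponent | c ≠ G.connectedComponentMk w} := by
    ext c
    constructor
    · rintro ⟨e, heD, rfl⟩
      obtain ⟨x, y, rfl, hadj, hxw, hyw, hfx, hsupp⟩ := hmem e heD
      rw [hfx]
      intro heq
      have hw : w ∈ (G.connectedComponentMk x).supp :=
        (ConnectedComponent.mem_supp_iff _ _).mpr heq.symm
      rw [hsupp] at hw
      rcases hw with h | h
      · exact hxw h.symm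
      · exact hyw h.symm
    · intro hc
      obtain ⟨v, u, hvu, hadj, hvw, huw, hcv, hsupp⟩ := other_comp hdeg1 c hc
      refine ⟨s(v, u), ⟨G.mem_edgeSet.mpr hadj, ?_⟩, ?_⟩
      · rintro ⟨-, hwmem⟩
        rcases Sym2.mem_iff.mp hwmem with h | h
        · exact hvw h.symm
        · exact huw h.symm
      · show G.connectedComponentMk (Quot.out s(v, u)).1 = c
        have hout : (Quot.out s(v, u)).1 ∈ s(v, u) := Sym2.out_fst_mem _
        rcases Sym2.mem_iff.mp hout with h | h
        · rw [h, hcv]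
        · rw [h, hcv]; exact ConnectedComponent.eq.mpr hadj.symm.reachable
  have hinj : Set.InjOn f D := by
    intro e1 h1 e2 h2 hfe
    obtain ⟨x1, y1, he1, hadj1, _, _, hfx1, hs1⟩ := hmem e1 h1
    obtain ⟨x2, y2, he2, hadj2, _, _, hfx2, hs2⟩ := hmem e2 h2
    have hcc : G.connectedComponentMk x1 = G.connectedComponentMk x2 := by
      rw [← hfx1, ← hfx2, hfe]
    have hseteq : ({x1, y1} : Set W) = {x2, y2} := by rw [← hs1, ← hs2, hcc]
    have hm1 : x1 = x2 ∨ x1 = y2 := by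
      have := hseteq ▸ (show x1 ∈ ({x1, y1} : Set W) by simp)
      simpa using this
    have hm2 : y1 = x2 ∨ y1 = y2 := by
      have := hseteq ▸ (show y1 ∈ ({x1, y1} : Set W) by simp)
      simpa using this
    have hne1 : x1 ≠ y1 := hadj1.ne
    have hne2 : x2 ≠ y2 := hadj2.ne
    rw [he1, he2, Sym2.eq_iff]
    rcases hm1 with h | h <;> rcases hm2 with h' | h' <;> simp_all
  have hDcard : D.ncard = 7 - G.degree w := by
    rw [hD, Set.ncard_diff (G.incidenceSet_subset w)]
    congr 1
    · rw [← coe_edgeFinset, Set.ncard_coe_finset, hedge]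
    · have : G.incidenceSet w = ↑(G.incidenceFinset w) := by
        ext e; rw [Finset.mem_coe, mem_incidenceFinset]
      rw [this, Set.ncard_coe_finset, card_incidenceFinset_eq_degree]
  rw [← himg, Set.ncard_image_of_injOn hinj, hDcard]


lemma nonempty_iso_P2 {G : SimpleGraph W} {v w : W} (hne : v ≠ w) (hadj : G.Adj v w) :
    Nonempty (G.induce ({v, w} : Set W) ≃g SimpleGraph.pathGraph 2) := by
  classical
  refine ⟨⟨⟨fun x => if x.1 = v then 0 else 1,
    fun i => if i = 0 then ⟨v, by simp⟩ else ⟨w, by simp⟩, ?_, ?_⟩, ?_⟩⟩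
  · rintro ⟨a, ha⟩
    simp only [Set.mem_insert_iff, Set.mem_singleton_iff] at ha
    obtain rfl | rfl := ha <;> simp [hne.symm]
  · intro i
    fin_cases i <;> simp [hne.symm]
  · rintro ⟨a, ha⟩ ⟨b, hb⟩
    simp only [Set.mem_insert_iff, Set.mem_singleton_iff] at ha hb
    obtain rfl | rfl := ha <;> obtain rfl | rfl := hb <;>
      simp [pathGraph_adj, hne, hne.symm, hadj, hadj.symm]


lemma nonempty_iso_P3 {G : SimpleGraph W} {a w b : W} (hab : a ≠ b) (haw : a ≠ w) (hbw : b ≠ w)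
    (h1 : G.Adj a w) (h2 : G.Adj w b) (h3 : ¬ G.Adj a b) :
    Nonempty (G.induce ({a, w, b} : Set W) ≃g SimpleGraph.pathGraph 3) := by
  classical
  refine ⟨⟨⟨fun x => if x.1 = a then 0 else if x.1 = w then 1 else 2,
    fun i => if i = 0 then ⟨a, by simp⟩ else if i = 1 then ⟨w, by simp⟩ else ⟨b, by simp⟩,
    ?_, ?_⟩, ?_⟩⟩
  · rintro ⟨x, hx⟩
    simp only [Set.mem_insert_iff, Set.mem_singleton_iff] at hx
    obtain rfl | rfl | rfl := hx <;> simp [haw, hab, haw.symm, hbw, hab.symm, hbw.symm]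
  · intro i
    fin_cases i <;> simp [haw, hab, haw.symm, hbw, hab.symm, hbw.symm]
  · have h3' : ¬ G.Adj b a := fun h => h3 h.symm
    rintro ⟨x, hx⟩ ⟨y, hy⟩
    simp only [Set.mem_insert_iff, Set.mem_singleton_iff] at hx hy
    obtain rfl | rfl | rfl := hx <;> obtain rfl | rfl | rfl := hy <;>
      simp [pathGraph_adj, haw, hab, haw.symm, hbw, hab.symm, hbw.symm,
        h1, h1.symm, h2, h2.symm, h3, h3']

lemma nonempty_iso_K13 {G : SimpleGraph W} {w a b c : W}
    (haw : a ≠ w) (hbw : b ≠ w) (hcw : c ≠ w) (hab : a ≠ b) (hac : a ≠ c) (hbc : b ≠ c)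
    (h1 : G.Adj w a) (h2 : G.Adj w b) (h3 : G.Adj w c)
    (nab : ¬ G.Adj a b) (nac : ¬ G.Adj a c) (nbc : ¬ G.Adj b c) :
    Nonempty (G.induce ({w, a, b, c} : Set W) ≃g completeBipartiteGraph (Fin 1) (Fin 3)) := by
  classical
  refine ⟨⟨⟨fun x => if x.1 = w then Sum.inl 0 else if x.1 = a then Sum.inr 0
      else if x.1 = b then Sum.inr 1 else Sum.inr 2,
    fun i => match i with
      | Sum.inl _ => ⟨w, by simp⟩
      | Sum.inr 0 => ⟨a, by simp⟩
      | Sum.inr 1 => ⟨b, by simp⟩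
      | Sum.inr 2 => ⟨c, by simp⟩,
    ?_, ?_⟩, ?_⟩⟩
  · rintro ⟨x, hx⟩
    simp only [Set.mem_insert_iff, Set.mem_singleton_iff] at hx
    obtain rfl | rfl | rfl | rfl := hx <;>
      simp [haw, hbw, hcw, hab, hac, hbc, haw.symm, hbw.symm, hcw.symm, hab.symm, hac.symm, hbc.symm]
  · rintro (i | i)
    · simp [Fin.eq_zero i]
    · fin_cases i <;>
        simp [haw, hbw, hcw, hab, hac, hbc, haw.symm, hbw.symm, hcw.symm, hab.symm, hac.symm, hbc.symm]
  · have nab' : ¬ G.Adj b a := fun h => nab h.symm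
    have nac' : ¬ G.Adj c a := fun h => nac h.symm
    have nbc' : ¬ G.Adj c b := fun h => nbc h.symm
    rintro ⟨x, hx⟩ ⟨y, hy⟩
    simp only [Set.mem_insert_iff, Set.mem_singleton_iff] at hx hy
    obtain rfl | rfl | rfl | rfl := hx <;> obtain rfl | rfl | rfl | rfl := hy <;>
      simp [haw, hbw, hcw, hab, hac, hbc, haw.symm, hbw.symm, hcw.symm, hab.symm, hac.symm,
        hbc.symm, h1, h1.symm, h2, h2.symm, h3, h3.symm, nab, nac, nbc, nab', nac', nbc']


lemma all_eq_one {s : Finset W} {f : W → ℕ} (h1 : ∀ v ∈ s, 1 ≤ f v)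
    (h2 : ∑ v ∈ s, f v = s.card) : ∀ v ∈ s, f v = 1 := by
  by_contra hc
  push_neg at hc
  obtain ⟨v, hv, hne⟩ := hc
  have hlt : ∑ x ∈ s, (1 : ℕ) < ∑ x ∈ s, f x :=
    Finset.sum_lt_sum h1 ⟨v, hv, lt_of_le_of_ne (h1 v hv) (Ne.symm hne)⟩
  simp [Finset.sum_const] at hlt
  omega

lemma degree_classification [Fintype W] (G : SimpleGraph W) [DecidableRel G.Adj]
    (h14 : ∑ v, G.degree v = 14)
    (hodd : (Finset.univ.filter (fun v => Odd (G.degree v))).card = 12)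
    (hpos : ∀ v : W, 1 ≤ G.degree v) :
    ∃ w : W, (G.degree w = 2 ∨ G.degree w = 3) ∧ ∀ v, v ≠ w → G.degree v = 1 := by
  classical
  let d : W → ℕ := fun v => G.degree v
  have h14 : ∑ v, d v = 14 := h14
  have hodd : (Finset.univ.filter (fun v => Odd (d v))).card = 12 := hodd
  have hpos : ∀ v : W, 1 ≤ d v := hpos
  set O := Finset.univ.filter (fun v => Odd (d v)) with hO
  set E := Finset.univ.filter (fun v => ¬ Odd (d v)) with hE
  have hsplit : ∑ v ∈ O, d v + ∑ v ∈ E, d v = 14 := by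
    rw [hO, hE, Finset.sum_filter_add_sum_filter_not]; exact h14
  have hOsum : 12 ≤ ∑ v ∈ O, d v := by
    calc 12 = O.card * 1 := by omega
    _ ≤ ∑ v ∈ O, d v := by
        rw [← smul_eq_mul]
        exact Finset.card_nsmul_le_sum O (fun v => d v) 1 (fun v _ => hpos v)
  have hEsum : E.card * 2 ≤ ∑ v ∈ E, d v := by
    rw [← smul_eq_mul]
    refine Finset.card_nsmul_le_sum E (fun v => d v) 2 (fun v hv => ?_)
    rw [hE, Finset.mem_filter] at hv
    show 2 ≤ d v
    rcases Nat.even_or_odd (d v) with he | ho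
    · obtain ⟨k, hk⟩ := he
      have h2 : d v = k + k := hk
      have h3 := hpos v
      omega
    · exact absurd ho hv.2

  have hEcard : E.card ≤ 1 := by omega
  interval_cases hEc : E.card
  · -- all degrees odd
    have hEempty : E = ∅ := Finset.card_eq_zero.mp hEc
    have hallodd : ∀ v : W, Odd (d v) := by
      intro v
      by_contra hv
      have : v ∈ E := by
        rw [hE, Finset.mem_filter]; exact ⟨Finset.mem_univ v, hv⟩
      simp [hEempty] at this
    have hOuniv : O = Finset.univ := by
      rw [hO]; apply Finset.filter_true_of_mem; intro v _; exact hallodd v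
    have hcarduniv : (Finset.univ : Finset W).card = 12 := by rw [← hOuniv]; exact hodd
    set T := Finset.univ.filter (fun v => ¬ (d v = 1)) with hT
    set Tc := Finset.univ.filter (fun v => d v = 1) with hTc
    have hTsplit : ∑ v ∈ Tc, d v + ∑ v ∈ T, d v = 14 := by
      rw [hTc, hT, Finset.sum_filter_add_sum_filter_not]; exact h14
    have hTcsum : ∑ v ∈ Tc, d v = Tc.card := by
      have : ∀ v ∈ Tc, d v = 1 := fun v hv => by
        rw [hTc, Finset.mem_filter] at hv; exact hv.2
      rw [Finset.sum_congr rfl this, Finset.sum_const, smul_eq_mul, mul_one]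
    have hTcards : Tc.card + T.card = 12 := by
      rw [hTc, hT, Finset.card_filter_add_card_filter_not]
      exact hcarduniv
    have hTsum3 : T.card * 3 ≤ ∑ v ∈ T, d v := by
      rw [← smul_eq_mul]
      refine Finset.card_nsmul_le_sum T (fun v => d v) 3 (fun v hv => ?_)
      rw [hT, Finset.mem_filter] at hv
      show 3 ≤ d v
      obtain ⟨k, hk⟩ := hallodd v
      have h2 : d v = 2 * k + 1 := hk
      have h3 := hv.2
      omega
    have hT1 : T.card = 1 := by
      rcases Nat.lt_or_ge T.card 2 with h | h
      · interval_cases hTcv : T.card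
        · exfalso
          have : T = ∅ := Finset.card_eq_zero.mp hTcv
          rw [this] at hTsplit
          simp at hTsplit
          omega
        · rfl
      · omega
    obtain ⟨w, hw⟩ := Finset.card_eq_one.mp hT1
    have hdw : d w = 3 := by
      have : ∑ v ∈ T, d v = d w := by rw [hw, Finset.sum_singleton]
      omega
    refine ⟨w, Or.inr hdw, fun v hv => ?_⟩
    by_contra hv1
    have : v ∈ T := by rw [hT]; simp [hv1]; exact hv1
    rw [hw, Finset.mem_singleton] at this
    exact hv this
  · -- one even vertex
    obtain ⟨w, hw⟩ := Finset.card_eq_one.mp hEc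
    have hwE : w ∈ E := by rw [hw]; exact Finset.mem_singleton_self w
    have hweven : ¬ Odd (d w) := by rw [hE, Finset.mem_filter] at hwE; exact hwE.2
    have hsumE : ∑ v ∈ E, d v = d w := by rw [hw, Finset.sum_singleton]
    have hdw2 : d w = 2 := by
      rcases Nat.even_or_odd (d w) with he | ho
      · obtain ⟨k, hk⟩ := he
        have h2 : d w = k + k := hk
        have h3 := hpos w
        omega
      · exact absurd ho hweven
    have hOsum12 : ∑ v ∈ O, d v = 12 := by omega
    have hO1 : ∀ v ∈ O, d v = 1 := by
      apply all_eq_one (fun v _ => hpos v)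
      rw [hOsum12, hodd]
    refine ⟨w, Or.inl hdw2, fun v hv => ?_⟩
    apply hO1
    rw [hO, Finset.mem_filter]
    refine ⟨Finset.mem_univ v, ?_⟩
    by_contra hvodd
    have : v ∈ E := by
      rw [hE, Finset.mem_filter]; exact ⟨Finset.mem_univ v, hvodd⟩
    rw [hw, Finset.mem_singleton] at this
    exact hv this

lemma ncard_of_iso {α β : Type} {G : SimpleGraph α} {H : SimpleGraph β} {s : Set α}
    (h : Nonempty (G.induce s ≃g H)) : s.ncard = Nat.card β := by
  obtain ⟨e⟩ := h
  rw [← Nat.card_coe_set_eq]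
  exact Nat.card_congr e.toEquiv

/-- A finite simple graph with exactly 7 edges, exactly 12 vertices of odd
degree, and no isolated vertices consists either of exactly one connected
component isomorphic to the path P₃ and exactly five components isomorphic to
the path P₂, or of exactly one connected component isomorphic to the star
K_{1,3} and exactly four components isomorphic to the path P₂. -/
theorem components_P3_with_5P2_or_K13_with_4P2
    {V : Type} [Finite V] (G : SimpleGraph V)
    (hedges : G.edgeSet.ncard = 7)
    (hodd : {v : V | Odd ((G.neighborSet v).ncard)}.ncard = 12)
    (hiso : ∀ v : V, (G.neighborSet v).ncard ≠ 0) :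
    ({c : G.ConnectedComponent |
        Nonempty (G.induce c.supp ≃g SimpleGraph.pathGraph 3)}.ncard = 1 ∧
      {c : G.ConnectedComponent |
        Nonempty (G.induce c.supp ≃g SimpleGraph.pathGraph 2)}.ncard = 5 ∧
      (∀ c : G.ConnectedComponent,
        Nonempty (G.induce c.supp ≃g SimpleGraph.pathGraph 3) ∨
        Nonempty (G.induce c.supp ≃g SimpleGraph.pathGraph 2))) ∨
    ({c : G.ConnectedComponent |
        Nonempty (G.induce c.supp ≃g completeBipartiteGraph (Fin 1) (Fin 3))}.ncard = 1 ∧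
      {c : G.ConnectedComponent |
        Nonempty (G.induce c.supp ≃g SimpleGraph.pathGraph 2)}.ncard = 4 ∧
      (∀ c : G.ConnectedComponent,
        Nonempty (G.induce c.supp ≃g completeBipartiteGraph (Fin 1) (Fin 3)) ∨
        Nonempty (G.induce c.supp ≃g SimpleGraph.pathGraph 2))) := by
  classical
  cases nonempty_fintype V
  have hncd : ∀ v : V, (G.neighborSet v).ncard = G.degree v := by
    intro v
    rw [Set.ncard_eq_toFinset_card']
    rfl
  have hedgecard : G.edgeFinset.card = 7 := by
    rw [← coe_edgeFinset, Set.ncard_coe_finset] at hedges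
    exact hedges
  have h14 : ∑ v, G.degree v = 14 := by
    rw [sum_degrees_eq_twice_card_edges, hedgecard]
  have hoddcard : (Finset.univ.filter (fun v => Odd (G.degree v))).card = 12 := by
    have hset : {v : V | Odd ((G.neighborSet v).ncard)} =
        ↑(Finset.univ.filter (fun v => Odd (G.degree v))) := by
      ext v; simp [hncd v]
    rw [hset, Set.ncard_coe_finset] at hodd
    exact hodd
  have hpos : ∀ v : V, 1 ≤ G.degree v := fun v =>
    Nat.one_le_iff_ne_zero.mpr (by rw [← hncd]; exact hiso v)
  obtain ⟨w, hw23, hdeg1⟩ := degree_classification G h14 hoddcard hpos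
  have hP2 : ∀ c : G.ConnectedComponent, c ≠ G.connectedComponentMk w →
      Nonempty (G.induce c.supp ≃g SimpleGraph.pathGraph 2) := by
    intro c hc
    obtain ⟨v, u, hvu, hadj, _, _, _, hsupp⟩ := other_comp hdeg1 c hc
    rw [hsupp]
    exact nonempty_iso_P2 hvu hadj
  have hsupp2 : ∀ c : G.ConnectedComponent, c ≠ G.connectedComponentMk w →
      c.supp.ncard = 2 := by
    intro c hc
    obtain ⟨v, u, hvu, _, _, _, _, hsupp⟩ := other_comp hdeg1 c hc
    rw [hsupp]
    exact Set.ncard_pair hvu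
  have hcount :
      {c : G.ConnectedComponent | c ≠ G.connectedComponentMk w}.ncard = 7 - G.degree w :=
    count_others hdeg1 hedgecard
  rcases hw23 with hw | hw
  · -- degree 2 : P3 case
    left
    obtain ⟨a, b, hab, hnb⟩ :=
      Finset.card_eq_two.mp ((G.card_neighborFinset_eq_degree w).trans hw)
    have hwa : G.Adj w a := by
      rw [← mem_neighborFinset, hnb]; simp
    have hwb : G.Adj w b := by
      rw [← mem_neighborFinset, hnb]; simp
    have haw : a ≠ w := hwa.ne'
    have hbw : b ≠ w := hwb.ne'
    have hda : G.degree a = 1 := hdeg1 a haw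
    have hdb : G.degree b = 1 := hdeg1 b hbw
    have hnadj : ¬ G.Adj a b := fun h => hbw (unique_nbr hda hwa.symm h).symm
    have hsuppw : (G.connectedComponentMk w).supp = {a, w, b} := by
      apply supp_eq_of_closed (by simp)
      · rintro x (rfl | rfl | rfl) y hxy
        · exact Or.inr (Or.inl (unique_nbr hda hxy hwa.symm))
        · have : y ∈ G.neighborFinset x := (mem_neighborFinset _ _ _).mpr hxy
          rw [hnb, Finset.mem_insert, Finset.mem_singleton] at this
          rcases this with rfl | rfl
          · exact Or.inl rfl
          · exact Or.inr (Or.inr rfl)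
        · exact Or.inr (Or.inl (unique_nbr hdb hxy hwb.symm))
      · rintro x (rfl | rfl | rfl)
        · exact hwa.reachable
        · exact Reachable.refl _
        · exact hwb.reachable
    have hisoP3 : Nonempty (G.induce (G.connectedComponentMk w).supp ≃g
        SimpleGraph.pathGraph 3) := by
      rw [hsuppw]
      exact nonempty_iso_P3 hab haw hbw hwa.symm hwb hnadj
    have hsupp3 : (G.connectedComponentMk w).supp.ncard = 3 := by
      rw [hsuppw, Set.ncard_insert_of_notMem (by simp [haw, hab]),
        Set.ncard_pair (fun h => hbw h.symm)]
    have hP3eq : {c : G.ConnectedComponent |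
        Nonempty (G.induce c.supp ≃g SimpleGraph.pathGraph 3)} =
        {G.connectedComponentMk w} := by
      ext c
      simp only [Set.mem_setOf_eq, Set.mem_singleton_iff]
      constructor
      · intro hc
        by_contra hne
        have h3 : c.supp.ncard = 3 := by
          rw [ncard_of_iso hc]; simp
        rw [hsupp2 c hne] at h3
        omega
      · rintro rfl
        exact hisoP3
    have hP2eq : {c : G.ConnectedComponent |
        Nonempty (G.induce c.supp ≃g SimpleGraph.pathGraph 2)} =
        {c : G.ConnectedComponent | c ≠ G.connectedComponentMk w} := by
      ext c
      simp only [Set.mem_setOf_eq]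
      constructor
      · intro hc heq
        rw [heq] at hc
        have h2 := ncard_of_iso hc
        rw [hsupp3] at h2
        simp at h2
      · exact hP2 c
    refine ⟨by rw [hP3eq]; exact Set.ncard_singleton _, ?_, ?_⟩
    · rw [hP2eq, hcount, hw]
    · intro c
      rcases eq_or_ne c (G.connectedComponentMk w) with rfl | hne
      · exact Or.inl hisoP3
      · exact Or.inr (hP2 c hne)
  · -- degree 3 : K13 case
    right
    obtain ⟨a, b, c', hab, hac, hbc, hnb⟩ :=
      Finset.card_eq_three.mp ((G.card_neighborFinset_eq_degree w).trans hw)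
    have hwa : G.Adj w a := by rw [← mem_neighborFinset, hnb]; simp
    have hwb : G.Adj w b := by rw [← mem_neighborFinset, hnb]; simp
    have hwc : G.Adj w c' := by rw [← mem_neighborFinset, hnb]; simp
    have haw : a ≠ w := hwa.ne'
    have hbw : b ≠ w := hwb.ne'
    have hcw : c' ≠ w := hwc.ne'
    have hda : G.degree a = 1 := hdeg1 a haw
    have hdb : G.degree b = 1 := hdeg1 b hbw
    have hdc : G.degree c' = 1 := hdeg1 c' hcw
    have nab : ¬ G.Adj a b := fun h => hbw (unique_nbr hda hwa.symm h).symm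
    have nac : ¬ G.Adj a c' := fun h => hcw (unique_nbr hda hwa.symm h).symm
    have nbc : ¬ G.Adj b c' := fun h => hcw (unique_nbr hdb hwb.symm h).symm
    have hsuppw : (G.connectedComponentMk w).supp = {w, a, b, c'} := by
      apply supp_eq_of_closed (by simp)
      · rintro x (rfl | rfl | rfl | rfl) y hxy
        · have : y ∈ G.neighborFinset x := (mem_neighborFinset _ _ _).mpr hxy
          rw [hnb, Finset.mem_insert, Finset.mem_insert, Finset.mem_singleton] at this
          rcases this with rfl | rfl | rfl
          · exact Or.inr (Or.inl rfl)
          · exact Or.inr (Or.inr (Or.inl rfl))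
          · exact Or.inr (Or.inr (Or.inr rfl))
        · exact Or.inl (unique_nbr hda hxy hwa.symm)
        · exact Or.inl (unique_nbr hdb hxy hwb.symm)
        · exact Or.inl (unique_nbr hdc hxy hwc.symm)
      · rintro x (rfl | rfl | rfl | rfl)
        · exact Reachable.refl _
        · exact hwa.reachable
        · exact hwb.reachable
        · exact hwc.reachable
    have hisoK : Nonempty (G.induce (G.connectedComponentMk w).supp ≃g
        completeBipartiteGraph (Fin 1) (Fin 3)) := by
      rw [hsuppw]
      exact nonempty_iso_K13 haw hbw hcw hab hac hbc hwa hwb hwc nab nac nbc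
    have hsupp4 : (G.connectedComponentMk w).supp.ncard = 4 := by
      rw [hsuppw,
        Set.ncard_insert_of_notMem (by simp [Ne.symm haw, Ne.symm hbw, Ne.symm hcw]),
        Set.ncard_insert_of_notMem (by simp [hab, hac]),
        Set.ncard_pair hbc]
    have hKeq : {c : G.ConnectedComponent |
        Nonempty (G.induce c.supp ≃g completeBipartiteGraph (Fin 1) (Fin 3))} =
        {G.connectedComponentMk w} := by
      ext c
      simp only [Set.mem_setOf_eq, Set.mem_singleton_iff]
      constructor
      · intro hc
        by_contra hne
        have h4 : c.supp.ncard = 4 := by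
          rw [ncard_of_iso hc]; simp [Nat.card_eq_fintype_card]
        rw [hsupp2 c hne] at h4
        omega
      · rintro rfl
        exact hisoK
    have hP2eq : {c : G.ConnectedComponent |
        Nonempty (G.induce c.supp ≃g SimpleGraph.pathGraph 2)} =
        {c : G.ConnectedComponent | c ≠ G.connectedComponentMk w} := by
      ext c
      simp only [Set.mem_setOf_eq]
      constructor
      · intro hc heq
        rw [heq] at hc
        have h2 := ncard_of_iso hc
        rw [hsupp4] at h2
        simp at h2
      · exact hP2 c
    refine ⟨by rw [hKeq]; exact Set.ncard_singleton _, ?_, ?_⟩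
    · rw [hP2eq, hcount, hw]
    · intro c
      rcases eq_or_ne c (G.connectedComponentMk w) with rfl | hne
      · exact Or.inl hisoK
      · exact Or.inr (hP2 c hne)
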